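/- Let k ≥ 1 be an integer with k ≢ 1 (mod 3). For 1 ≤ i ≤ k let α_i = 2·cos(2πi/(2k+1)) ∈ ℂ and let ℚ(α_i) ⊆ ℂ be the subfield generated by α_i over ℚ. Then there are infinitely many primes p such that 2 is not a square in ℤ/pℤ and, for every 1 ≤ i ≤ k, every nonzero prime ideal of the ring of integers of ℚ(α_i) lying over p has inertia degree at least two over p. -/

import Mathlib

open Polynomial Finset

/-! Auxiliary lemmas for Proposition 3.2. -/

private lemma aux_dickson_eval (R : Type*) [CommRing R] (n : ℕ) (x : R) :
    Polynomial.aeval x (Polynomial.dickson 1 (1 : ℤ) n) =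
      Polynomial.eval x (Polynomial.dickson 1 (1 : R) n) := by
  rw [Polynomial.aeval_def, Polynomial.eval₂_eq_eval_map, Polynomial.map_dickson, map_one]

private lemma aux_aeval_hom {R S : Type*} [CommRing R] [CommRing S] (g : R →+* S) (x : R)
    (q : Polynomial ℤ) : g (Polynomial.aeval x q) = Polynomial.aeval (g x) q := by
  rw [Polynomial.aeval_def, Polynomial.aeval_def, Polynomial.hom_eval₂]
  congr 1
  exact RingHom.ext_int _ _

private lemma aux_complex_dickson (n : ℕ) (ζ : ℂ) (hζ0 : ζ ≠ 0) (hζn : ζ ^ n = 1) :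
    Polynomial.aeval (ζ + ζ⁻¹) (Polynomial.dickson 1 (1 : ℤ) n) = 2 := by
  rw [aux_dickson_eval, Polynomial.dickson_one_one_eval_add_inv _ _ (mul_inv_cancel₀ hζ0),
    hζn, inv_pow, hζn, inv_one]
  norm_num

private lemma aux_complex_sum (n k : ℕ) (hn : n = 2 * k + 1) (ζ : ℂ) (hζ0 : ζ ≠ 0)
    (hζ1 : ζ ≠ 1) (hζn : ζ ^ n = 1) :
    Polynomial.aeval (ζ + ζ⁻¹) (1 + ∑ j ∈ Finset.Icc 1 k, Polynomial.dickson 1 (1 : ℤ) j) = 0 := by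
  have hgeom : ∑ j ∈ Finset.range n, ζ ^ j = 0 := by
    rw [geom_sum_eq hζ1, hζn, sub_self, zero_div]
  have hsum : Polynomial.aeval (ζ + ζ⁻¹) (1 + ∑ j ∈ Finset.Icc 1 k, dickson 1 (1 : ℤ) j)
      = 1 + ∑ j ∈ Finset.Icc 1 k, (ζ ^ j + (ζ⁻¹) ^ j) := by
    rw [map_add, map_one, map_sum]
    congr 1
    refine Finset.sum_congr rfl fun j _ => ?_
    rw [aux_dickson_eval, Polynomial.dickson_one_one_eval_add_inv _ _ (mul_inv_cancel₀ hζ0)]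
  have hIcc : ∀ f : ℕ → ℂ, ∑ j ∈ Finset.Icc 1 k, f j = ∑ i ∈ Finset.range k, f (1 + i) := by
    intro f
    rw [← Finset.Ico_add_one_right_eq_Icc, Finset.sum_Ico_eq_sum_range]
    simp
  have key : ζ ^ k * (1 + ∑ j ∈ Finset.Icc 1 k, (ζ ^ j + (ζ⁻¹) ^ j))
      = ∑ j ∈ Finset.range n, ζ ^ j := by
    rw [hn, show 2 * k + 1 = (k + 1) + k by omega, Finset.sum_range_add, Finset.sum_range_succ]
    rw [hIcc, mul_add, mul_one, Finset.mul_sum]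
    have hterm : ∀ i ∈ Finset.range k,
        ζ ^ k * (ζ ^ (1 + i) + (ζ⁻¹) ^ (1 + i)) = ζ ^ (k + 1 + i) + ζ ^ (k - 1 - i) := by
      intro i hi
      rw [Finset.mem_range] at hi
      have e1 : ζ ^ k * ζ ^ (1 + i) = ζ ^ (k + 1 + i) := by rw [← pow_add]; congr 1; omega
      have e2 : ζ ^ (k - 1 - i) * ζ ^ (1 + i) = ζ ^ k := by rw [← pow_add]; congr 1; omega
      rw [mul_add, e1, inv_pow, ← e2, mul_assoc, mul_inv_cancel₀ (pow_ne_zero _ hζ0), mul_one]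
    rw [Finset.sum_congr rfl hterm, Finset.sum_add_distrib,
      show ∑ i ∈ Finset.range k, ζ ^ (k - 1 - i) = ∑ i ∈ Finset.range k, ζ ^ i from
        Finset.sum_range_reflect (fun i => ζ ^ i) k]
    ring
  have hS : (1 + ∑ j ∈ Finset.Icc 1 k, (ζ ^ j + (ζ⁻¹) ^ j)) = 0 := by
    rcases mul_eq_zero.mp (key.trans hgeom) with h | h
    · exact absurd h (pow_ne_zero _ hζ0)
    · exact h
  rw [hsum, hS]

private lemma aux_coprime (n p : ℕ) (hn3 : 3 ≤ n) (h3 : ¬ 3 ∣ n) (hp2 : 2 ≤ p)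
    (hpn : (p : ZMod n) = 2) : Nat.Coprime n (p ^ 2 - 1) := by
  have hmod : p ≡ 2 [MOD n] := by
    have h2 : ((p : ℕ) : ZMod n) = ((2 : ℕ) : ZMod n) := by rw [hpn]; norm_num
    exact (ZMod.natCast_eq_natCast_iff _ _ _).mp h2
  have hp4 : 4 ≤ p ^ 2 := by nlinarith
  have hsq : p ^ 2 ≡ 4 [MOD n] := by
    rw [pow_two, show (4 : ℕ) = 2 * 2 by norm_num]
    exact hmod.mul hmod
  have hm : p ^ 2 - 1 ≡ 3 [MOD n] := by
    apply Nat.ModEq.add_right_cancel' 1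
    rw [Nat.sub_add_cancel (by omega)]
    exact hsq
  have hdvd : n ∣ (p ^ 2 - 1) - 3 := (Nat.modEq_iff_dvd' (by omega)).mp hm.symm
  have hdn : Nat.gcd n (p ^ 2 - 1) ∣ n := Nat.gcd_dvd_left _ _
  have hdp : Nat.gcd n (p ^ 2 - 1) ∣ p ^ 2 - 1 := Nat.gcd_dvd_right _ _
  have hd3 : Nat.gcd n (p ^ 2 - 1) ∣ 3 := by
    have h1 : Nat.gcd n (p ^ 2 - 1) ∣ (p ^ 2 - 1) - 3 := hdn.trans hdvd
    have := Nat.dvd_sub hdp h1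
    rwa [Nat.sub_sub_self (by omega)] at this
  rcases (Nat.prime_three).eq_one_or_self_of_dvd _ hd3 with h | h
  · exact h
  · exact absurd (h ▸ hdn) h3

private lemma aux_zmod (p n : ℕ) (hp : p.Prime) (hn : 0 < n)
    (hcop : Nat.Coprime n (p ^ 2 - 1)) (a : ZMod p)
    (h2 : Polynomial.aeval a (Polynomial.dickson 1 (1 : ℤ) n) = 2) : a = 2 := by
  haveI : Fact p.Prime := ⟨hp⟩
  set W := AlgebraicClosure (ZMod p) with hW
  haveI : CharP W p := charP_of_injective_algebraMap (algebraMap (ZMod p) W).injective p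
  haveI : ExpChar W p := ExpChar.prime hp
  set a' : W := algebraMap (ZMod p) W a with ha'
  obtain ⟨t, ht⟩ := IsAlgClosed.exists_root (k := W) (X ^ 2 - C a' * X + 1) (by
    have hdeg : (X ^ 2 - C a' * X + 1 : Polynomial W).degree = 2 := by compute_degree!
    rw [hdeg]; exact two_ne_zero)
  have hroot : t ^ 2 - a' * t + 1 = 0 := by
    have h := ht
    simp only [Polynomial.IsRoot.def, Polynomial.eval_add, Polynomial.eval_sub,
      Polynomial.eval_mul, Polynomial.eval_pow, Polynomial.eval_C, Polynomial.eval_X,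
      Polynomial.eval_one] at h
    linear_combination h
  have ht0 : t ≠ 0 := by
    intro h
    rw [h] at hroot
    simp at hroot
  have htt : t * t⁻¹ = 1 := mul_inv_cancel₀ ht0
  have htu : t + t⁻¹ = a' := by
    have hinv : t⁻¹ = a' - t := inv_eq_of_mul_eq_one_right (by linear_combination -hroot)
    rw [hinv]; ring
  have hdn : t ^ n + (t ^ n)⁻¹ = 2 := by
    have hmap : Polynomial.aeval a' (dickson 1 (1 : ℤ) n) = 2 := by
      have hh := aux_aeval_hom (algebraMap (ZMod p) W) a (dickson 1 (1 : ℤ) n)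
      rw [h2, map_ofNat] at hh
      rw [ha']
      exact hh.symm
    have hcalc : t ^ n + (t⁻¹) ^ n = 2 := by
      calc t ^ n + (t⁻¹) ^ n
          = Polynomial.eval (t + t⁻¹) (dickson 1 (1 : W) n) :=
            (Polynomial.dickson_one_one_eval_add_inv _ _ htt n).symm
        _ = Polynomial.aeval a' (dickson 1 (1 : ℤ) n) := by
              rw [htu]; exact (aux_dickson_eval W n a').symm
        _ = 2 := hmap
    rwa [inv_pow] at hcalc
  have htn0 : t ^ n ≠ 0 := pow_ne_zero _ ht0
  have htn : t ^ n = 1 := by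
    have hmul : t ^ n * (t ^ n)⁻¹ = 1 := mul_inv_cancel₀ htn0
    have h0 : (t ^ n - 1) ^ 2 = 0 := by
      linear_combination (t ^ n) * hdn - hmul
    have := sq_eq_zero_iff.mp h0
    linear_combination this
  -- Frobenius argument: t ^ (p ^ 2 - 1) = 1
  have ha'p : a' ^ p = a' := by rw [ha', ← map_pow, ZMod.pow_card]
  have h1 : t ^ 2 + 1 = a' * t := by linear_combination hroot
  have h2' : (t ^ p) ^ 2 + 1 = a' * t ^ p := by
    have hc := congrArg (fun x : W => x ^ p) h1
    rw [add_pow_char, mul_pow, one_pow, ha'p, ← pow_mul, mul_comm 2 p, pow_mul] at hc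
    exact hc
  have hcases : t ^ p = t ∨ t ^ p = t⁻¹ := by
    have hzero : (t ^ p - t) * (t ^ p - t⁻¹) = 0 := by
      linear_combination h2' - (t ^ p) * htu + htt
    rcases mul_eq_zero.mp hzero with h | h
    · exact Or.inl (sub_eq_zero.mp h)
    · exact Or.inr (sub_eq_zero.mp h)
  have hB : t ^ (p ^ 2 - 1) = 1 := by
    obtain ⟨q, hq⟩ : ∃ q, p = q + 2 := ⟨p - 2, by have := hp.two_le; omega⟩
    have e : p ^ 2 - 1 = (p - 1) * (p + 1) := by
      subst hq
      have hsq : (q + 2) ^ 2 = (q + 1) * (q + 3) + 1 := by ring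
      rw [hsq, Nat.add_sub_cancel]
      congr 1 <;> omega
    rcases hcases with h | h
    · have h1' : t ^ (p - 1) = 1 := by
        have hstep : t ^ (p - 1) * t = 1 * t := by
          rw [← pow_succ, show p - 1 + 1 = p by have := hp.two_le; omega, h, one_mul]
        exact mul_right_cancel₀ ht0 hstep
      rw [e, pow_mul, h1', one_pow]
    · have h1' : t ^ (p + 1) = 1 := by
        rw [pow_succ, h, inv_mul_cancel₀ ht0]
      have e' : p ^ 2 - 1 = (p + 1) * (p - 1) := by rw [e, Nat.mul_comm]
      rw [e', pow_mul, h1', one_pow]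
  have hord1 : orderOf t ∣ n := orderOf_dvd_of_pow_eq_one htn
  have hord2 : orderOf t ∣ p ^ 2 - 1 := orderOf_dvd_of_pow_eq_one hB
  have hordd : orderOf t ∣ 1 := by
    have hg := Nat.dvd_gcd hord1 hord2
    rwa [Nat.Coprime.gcd_eq_one hcop] at hg
  have ht1 : t = 1 := orderOf_eq_one_iff.mp (Nat.dvd_one.mp hordd)
  have ha2 : a' = 2 := by
    rw [← htu, ht1]
    norm_num
  have hfin : algebraMap (ZMod p) W a = algebraMap (ZMod p) W 2 := by
    rw [← ha', ha2, map_ofNat]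
  exact (algebraMap (ZMod p) W).injective hfin

set_option maxHeartbeats 1000000 in
set_option synthInstance.maxHeartbeats 1000000 in
private lemma aux_field (n k : ℕ) (hk : 1 ≤ k) (hn : n = 2 * k + 1) (h3 : ¬ 3 ∣ n)
    (α : ℂ) (ζ : ℂ) (hζ1 : ζ ≠ 1) (hζn : ζ ^ n = 1) (hα : α = ζ + ζ⁻¹)
    (p : ℕ) (hp : p.Prime) (hpn : (p : ZMod n) = 2)
    (P : Ideal (NumberField.RingOfIntegers (IntermediateField.adjoin ℚ {α})))
    (hP : P.IsPrime)
    (hcomap : P.comap (algebraMap ℤ (NumberField.RingOfIntegers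
      (IntermediateField.adjoin ℚ {α}))) = Ideal.span {(p : ℤ)}) :
    2 ≤ Ideal.inertiaDeg' (Ideal.span {(p : ℤ)}) P := by
  haveI : Fact p.Prime := ⟨hp⟩
  haveI : P.IsPrime := hP
  have hζ0 : ζ ≠ 0 := by
    intro h
    rw [h, zero_pow (by omega : n ≠ 0)] at hζn
    exact zero_ne_one hζn
  -- integrality of α
  have hζint : IsIntegral ℤ ζ := by
    refine ⟨X ^ n - C 1, Polynomial.monic_X_pow_sub_C 1 (by omega), ?_⟩
    simp [hζn]
  have hζinv : ζ⁻¹ = ζ ^ (n - 1) := by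
    have hmul : ζ * ζ ^ (n - 1) = 1 := by
      rw [← pow_succ', show n - 1 + 1 = n by omega, hζn]
    exact inv_eq_of_mul_eq_one_right hmul
  have hαint : IsIntegral ℤ α := by
    rw [hα, hζinv]
    exact hζint.add (hζint.pow _)
  have hαQ : IsIntegral ℚ α := hαint.tower_top
  haveI : FiniteDimensional ℚ (IntermediateField.adjoin ℚ {α}) :=
    IntermediateField.adjoin.finiteDimensional hαQ
  haveI : NumberField (IntermediateField.adjoin ℚ {α}) := ⟨⟩
  have hαmem : α ∈ IntermediateField.adjoin ℚ {α} := IntermediateField.mem_adjoin_simple_self ℚ α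
  have hmemO : IsIntegral ℤ (⟨α, hαmem⟩ : IntermediateField.adjoin ℚ {α}) := by
    rw [← isIntegral_algebraMap_iff
      (algebraMap (IntermediateField.adjoin ℚ {α}) ℂ).injective]
    exact hαint
  set A : NumberField.RingOfIntegers (IntermediateField.adjoin ℚ {α}) :=
    ⟨⟨α, hαmem⟩, hmemO⟩ with hA
  set g : NumberField.RingOfIntegers (IntermediateField.adjoin ℚ {α}) →+* ℂ :=
    (algebraMap (IntermediateField.adjoin ℚ {α}) ℂ).comp
      (algebraMap (NumberField.RingOfIntegers (IntermediateField.adjoin ℚ {α}))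
        (IntermediateField.adjoin ℚ {α})) with hgdef
  have hg : Function.Injective g :=
    (algebraMap (IntermediateField.adjoin ℚ {α}) ℂ).injective.comp
      NumberField.RingOfIntegers.coe_injective
  have hgA : g A = ζ + ζ⁻¹ := by rw [← hα]; rfl
  have hdO : Polynomial.aeval A (dickson 1 (1 : ℤ) n) = 2 := by
    apply hg
    rw [aux_aeval_hom g A, hgA, map_ofNat]
    exact aux_complex_dickson n ζ hζ0 hζn
  have hFO : Polynomial.aeval A (1 + ∑ j ∈ Finset.Icc 1 k, dickson 1 (1 : ℤ) j) = 0 := by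
    apply hg
    rw [aux_aeval_hom g A, hgA, map_zero]
    exact aux_complex_sum n k hn ζ hζ0 hζ1 hζn
  -- inertia degree
  have hirr : Irreducible ((p : ℕ) : ℤ) := (Nat.prime_iff_prime_int.mp hp).irreducible
  haveI hmax : (Ideal.span {((p : ℕ) : ℤ)}).IsMaximal := by
    have := PrincipalIdealRing.isMaximal_of_irreducible hirr
    simpa [Ideal.submodule_span_eq] using this
  haveI hlies : P.LiesOver (Ideal.span {((p : ℕ) : ℤ)}) := ⟨hcomap.symm⟩
  rw [Ideal.inertiaDeg_algebraMap]
  by_contra hlt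
  push_neg at hlt
  have hpos : 0 < Module.finrank (ℤ ⧸ Ideal.span {((p : ℕ) : ℤ)})
      (NumberField.RingOfIntegers (IntermediateField.adjoin ℚ {α}) ⧸ P) := by
    have := Ideal.inertiaDeg'_pos (Ideal.span {((p : ℕ) : ℤ)}) P
    rwa [Ideal.inertiaDeg_algebraMap] at this
  have hone : Module.finrank (ℤ ⧸ Ideal.span {((p : ℕ) : ℤ)})
      (NumberField.RingOfIntegers (IntermediateField.adjoin ℚ {α}) ⧸ P) = 1 := by omega
  haveI : Nontrivial (NumberField.RingOfIntegers (IntermediateField.adjoin ℚ {α}) ⧸ P) :=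
    Ideal.Quotient.nontrivial_of_liesOver_of_isPrime P (Ideal.span {((p : ℕ) : ℤ)})
  letI : Field (ℤ ⧸ Ideal.span {((p : ℕ) : ℤ)}) := Ideal.Quotient.field _
  have hsurj : Function.Surjective (algebraMap (ℤ ⧸ Ideal.span {((p : ℕ) : ℤ)})
      (NumberField.RingOfIntegers (IntermediateField.adjoin ℚ {α}) ⧸ P)) := by
    intro w
    obtain ⟨c, hc⟩ := (finrank_eq_one_iff_of_nonzero'
      (1 : NumberField.RingOfIntegers (IntermediateField.adjoin ℚ {α}) ⧸ P)
      one_ne_zero).mp hone w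
    exact ⟨c, by rwa [Algebra.smul_def, mul_one] at hc⟩
  set e0 : (ℤ ⧸ Ideal.span {((p : ℕ) : ℤ)}) ≃+* ZMod p := Int.quotientSpanNatEquivZMod p
    with he0
  set χ : ZMod p →+* (NumberField.RingOfIntegers (IntermediateField.adjoin ℚ {α}) ⧸ P) :=
    (algebraMap (ℤ ⧸ Ideal.span {((p : ℕ) : ℤ)})
      (NumberField.RingOfIntegers (IntermediateField.adjoin ℚ {α}) ⧸ P)).comp
      e0.symm.toRingHom with hχdef
  have hχ : Function.Bijective χ := ⟨χ.injective, hsurj.comp e0.symm.surjective⟩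
  set E := RingEquiv.ofBijective χ hχ with hE
  set ψ : NumberField.RingOfIntegers (IntermediateField.adjoin ℚ {α}) →+* ZMod p :=
    E.symm.toRingHom.comp (Ideal.Quotient.mk P) with hψ
  set a : ZMod p := ψ A with haa
  have hda : Polynomial.aeval a (dickson 1 (1 : ℤ) n) = 2 := by
    rw [haa, ← aux_aeval_hom ψ A, hdO, map_ofNat]
  have hFa : Polynomial.aeval a (1 + ∑ j ∈ Finset.Icc 1 k, dickson 1 (1 : ℤ) j) = 0 := by
    rw [haa, ← aux_aeval_hom ψ A, hFO, map_zero]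
  have hcop : Nat.Coprime n (p ^ 2 - 1) := aux_coprime n p (by omega) h3 hp.two_le hpn
  have ha2 : a = 2 := aux_zmod p n hp (by omega) hcop a hda
  rw [ha2] at hFa
  -- evaluate the sum polynomial at 2
  have heval2 : Polynomial.aeval (2 : ZMod p) (1 + ∑ j ∈ Finset.Icc 1 k, dickson 1 (1 : ℤ) j)
      = (n : ZMod p) := by
    rw [map_add, map_one, map_sum]
    have hterm : ∀ j ∈ Finset.Icc 1 k,
        Polynomial.aeval (2 : ZMod p) (dickson 1 (1 : ℤ) j) = 2 := by
      intro j _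
      rw [aux_dickson_eval, show (2 : ZMod p) = 1 + 1 by norm_num,
        Polynomial.dickson_one_one_eval_add_inv (1 : ZMod p) 1 (by norm_num), one_pow]
    rw [Finset.sum_congr rfl hterm, Finset.sum_const, Nat.card_Icc, hn]
    simp only [Nat.add_sub_cancel, nsmul_eq_mul]
    push_cast
    ring
  rw [heval2] at hFa
  have hpdvd : p ∣ n := (ZMod.natCast_eq_zero_iff n p).mp hFa
  have hmod2 : p % n = 2 := by
    have h2 : ((p : ℕ) : ZMod n) = ((2 : ℕ) : ZMod n) := by rw [hpn]; norm_num
    have hme := (ZMod.natCast_eq_natCast_iff _ _ _).mp h2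
    have h' : p % n = 2 % n := hme
    have h2n : 2 % n = 2 := Nat.mod_eq_of_lt (by omega)
    omega
  have hp2' : p ∣ 2 := by
    have := (Nat.dvd_mod_iff hpdvd).mpr (dvd_refl p)
    rwa [hmod2] at this
  have hpeq : p = 2 := by
    rcases (Nat.prime_two).eq_one_or_self_of_dvd p hp2' with h | h
    · exact absurd h hp.one_lt.ne'
    · exact h
  rw [hpeq] at hpdvd
  omega

set_option maxHeartbeats 1000000 in
set_option synthInstance.maxHeartbeats 1000000 in
/-- Proposition 3.2: for `k ≥ 1` with `k ≢ 1 (mod 3)`, there are infinitely many primes `p`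
such that `2` is not a square mod `p` and every prime of the ring of integers of
`ℚ(2cos(2πi/(2k+1)))` above `p` has inertia degree at least two, for all `1 ≤ i ≤ k`. -/
theorem infinitely_many_primes_with_inertia_deg_ge_two
    (k : ℕ) (hk : 1 ≤ k) (hk3 : ¬ (k % 3 = 1)) :
    {p : ℕ | p.Prime ∧ ¬ IsSquare (2 : ZMod p) ∧
      ∀ i ∈ Finset.Icc 1 k,
        ∀ P : Ideal (NumberField.RingOfIntegers
          (IntermediateField.adjoin ℚ
            {(2 * Complex.cos (2 * Real.pi * i / (2 * k + 1)) : ℂ)})),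
          P.IsPrime → P ≠ ⊥ →
          P.comap (algebraMap ℤ (NumberField.RingOfIntegers
            (IntermediateField.adjoin ℚ
              {(2 * Complex.cos (2 * Real.pi * i / (2 * k + 1)) : ℂ)})))
            = Ideal.span {(p : ℤ)} →
          2 ≤ Ideal.inertiaDeg'
            (Ideal.span {(p : ℤ)}) P }.Infinite := by
  set n := 2 * k + 1 with hn
  have h3 : ¬ 3 ∣ n := by omega
  have hcop8 : Nat.Coprime 8 n := by
    have h2 : Nat.Coprime 2 n := (Nat.prime_two.coprime_iff_not_dvd).mpr (by omega)
    have h8 : Nat.Coprime (2 ^ 3) n := Nat.Coprime.pow_left 3 h2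
    simpa using h8
  haveI : NeZero (8 * n) := ⟨by omega⟩
  haveI : NeZero n := ⟨by omega⟩
  set crt : ZMod (8 * n) ≃+* ZMod 8 × ZMod n := ZMod.chineseRemainder hcop8 with hcrt
  set b : ZMod (8 * n) := crt.symm (3, 2) with hb
  have hbunit : IsUnit b := by
    have h3u : IsUnit (3 : ZMod 8) := ⟨⟨3, 3, by decide, by decide⟩, rfl⟩
    have h2u : IsUnit (2 : ZMod n) := by
      have := (ZMod.isUnit_iff_coprime 2 n).mpr ((Nat.prime_two.coprime_iff_not_dvd).mpr (by omega))
      simpa using this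
    obtain ⟨u, hu⟩ := h3u
    obtain ⟨v, hv⟩ := h2u
    have hpu : IsUnit ((3, 2) : ZMod 8 × ZMod n) := by
      refine isUnit_iff_exists_inv.mpr ⟨((u⁻¹ : (ZMod 8)ˣ), (v⁻¹ : (ZMod n)ˣ)), ?_⟩
      rw [Prod.mk_mul_mk, ← hu, ← hv]
      simp [Prod.ext_iff]
    exact hpu.map crt.symm.toRingHom
  apply Set.Infinite.mono _ (Nat.infinite_setOfPred_prime_and_eq_mod hbunit)
  rintro p ⟨hpp, hpe⟩
  haveI : Fact p.Prime := ⟨hpp⟩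
  have hsplit : ((p : ZMod 8), (p : ZMod n)) = ((3 : ZMod 8), (2 : ZMod n)) := by
    have h1 : crt ((p : ℕ) : ZMod (8 * n)) = crt b := congrArg crt hpe
    rw [hb, RingEquiv.apply_symm_apply] at h1
    rw [← h1, map_natCast]
    rfl
  obtain ⟨hp8, hpn⟩ := Prod.ext_iff.mp hsplit
  simp only at hp8 hpn
  have hp83 : p % 8 = 3 := by
    have h2 : ((p : ℕ) : ZMod 8) = ((3 : ℕ) : ZMod 8) := by rw [hp8]; norm_num
    have hme := (ZMod.natCast_eq_natCast_iff _ _ _).mp h2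
    have h' : p % 8 = 3 % 8 := hme
    omega
  have hp2 : p ≠ 2 := by omega
  refine ⟨hpp, ?_, ?_⟩
  · rw [ZMod.exists_sq_eq_two_iff hp2]
    omega
  · intro i hi P hP hP0 hcomap
    rw [Finset.mem_Icc] at hi
    obtain ⟨z, hz⟩ : ∃ z : ℂ, z = 2 * Real.pi * i / (2 * k + 1) := ⟨_, rfl⟩
    obtain ⟨ζ, hζ⟩ : ∃ ζ : ℂ, ζ = Complex.exp (z * Complex.I) := ⟨_, rfl⟩
    have hden : ((2 : ℂ) * k + 1) = (n : ℂ) := by rw [hn]; push_cast; ring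
    have hdenne : ((2 : ℂ) * k + 1) ≠ 0 := by
      rw [hden]
      exact Nat.cast_ne_zero.mpr (by omega)
    have hπ : ((Real.pi : ℂ)) ≠ 0 := Complex.ofReal_ne_zero.mpr Real.pi_ne_zero
    have hζn : ζ ^ n = 1 := by
      rw [hζ, ← Complex.exp_nat_mul]
      have harg : (n : ℂ) * (z * Complex.I) = ((i : ℤ) : ℂ) * (2 * Real.pi * Complex.I) := by
        rw [hz, ← hden]
        push_cast
        field_simp
      rw [harg]
      exact Complex.exp_int_mul_two_pi_mul_I i
    have hζ1 : ζ ≠ 1 := by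
      intro h
      rw [hζ, Complex.exp_eq_one_iff] at h
      obtain ⟨m, hm⟩ := h
      have h2 : (2 * (Real.pi : ℂ) * Complex.I) * (i : ℂ)
          = (2 * (Real.pi : ℂ) * Complex.I) * ((m : ℂ) * (2 * (k : ℂ) + 1)) := by
        rw [hz] at hm
        field_simp at hm
        linear_combination (2 * (Real.pi : ℂ) * Complex.I) * hm
      have h4 : (2 * (Real.pi : ℂ) * Complex.I) ≠ 0 := by
        simp [hπ, Complex.I_ne_zero]
      have h5 : ((i : ℤ) : ℂ) = ((m * (2 * k + 1) : ℤ) : ℂ) := by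
        push_cast
        exact mul_left_cancel₀ h4 h2
      have h6 : (i : ℤ) = m * (2 * (k : ℤ) + 1) := by exact_mod_cast h5
      have h1k : 1 ≤ (i : ℤ) := by exact_mod_cast hi.1
      have h2k : (i : ℤ) ≤ (k : ℤ) := by exact_mod_cast hi.2
      have hkpos : (0 : ℤ) ≤ 2 * (k : ℤ) + 1 := by positivity
      rcases le_or_gt m 0 with hm0 | hm0
      · nlinarith
      · nlinarith
    have hα : (2 * Complex.cos (2 * Real.pi * i / (2 * k + 1)) : ℂ) = ζ + ζ⁻¹ := by
      rw [hζ, hz, Complex.two_cos, neg_mul, Complex.exp_neg]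
    exact aux_field n k hk hn h3 _ ζ hζ1 hζn hα p hpp hpn P hP hcomap
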